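/- In the polynomial ring ℂ[H_0, H_1] modulo the ideal I = (H_0⁴(2H_0+H_1), H_1⁴(H_0+2H_1)), the homogeneous component of degree 8 of the quotient ring is one-dimensional over ℂ. -/

import Mathlib

open MvPolynomial

noncomputable def chowIdeal1 : Ideal (MvPolynomial (Fin 2) ℂ) :=
  Ideal.span {X 0 ^ 4 * (2 * X 0 + X 1), X 1 ^ 4 * (X 0 + 2 * X 1)}

namespace Chow15

/-- exponent function: `e a b` is the exponent of `X0^a X1^b`. -/
noncomputable def e (a b : ℕ) : Fin 2 →₀ ℕ := Finsupp.single 0 a + Finsupp.single 1 b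

lemma e_apply0 (a b : ℕ) : e a b 0 = a := by
  simp [e, Finsupp.single_apply]

lemma e_apply1 (a b : ℕ) : e a b 1 = b := by
  simp [e, Finsupp.single_apply]

lemma e_eq_iff {a b c d : ℕ} : e a b = e c d ↔ a = c ∧ b = d := by
  constructor
  · intro h
    exact ⟨by rw [← e_apply0 a b, h, e_apply0], by rw [← e_apply1 a b, h, e_apply1]⟩
  · rintro ⟨rfl, rfl⟩; rfl

lemma eq_e (m : Fin 2 →₀ ℕ) : m = e (m 0) (m 1) := by
  ext i
  fin_cases i
  · simp [e, Finsupp.single_apply]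
  · simp [e, Finsupp.single_apply]

lemma X_pow_mul' (a b : ℕ) :
    (X 0 ^ a * X 1 ^ b : MvPolynomial (Fin 2) ℂ) = monomial (e a b) 1 := by
  rw [X_pow_eq_monomial, X_pow_eq_monomial, monomial_mul, one_mul]
  rfl

lemma mono_def (a b : ℕ) (c : ℂ) :
    (monomial (e a b) c : MvPolynomial (Fin 2) ℂ) = C c * (X 0 ^ a * X 1 ^ b) := by
  rw [X_pow_mul', C_mul_monomial, mul_one]

lemma degree_fin2 (m : Fin 2 →₀ ℕ) : Finsupp.degree m = m 0 + m 1 := by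
  rw [Finsupp.degree_eq_weight_one, Finsupp.weight_apply, Finsupp.sum_fintype]
  · simp [Fin.sum_univ_two]
  · intro i; simp

def wgt : ℕ → ℂ := fun j => (-2) ^ (min j (8 - j))

noncomputable def L : MvPolynomial (Fin 2) ℂ →ₗ[ℂ] ℂ where
  toFun f := ∑ j ∈ Finset.range 9, wgt j * coeff (e (8 - j) j) f
  map_add' f g := by simp [coeff_add, mul_add, Finset.sum_add_distrib]
  map_smul' c f := by
    simp only [coeff_smul, smul_eq_mul, RingHom.id_apply, Finset.mul_sum]
    exact Finset.sum_congr rfl fun j _ => by ring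

lemma L_mono (a b : ℕ) (c : ℂ) :
    L (monomial (e a b) c) = if a + b = 8 then wgt b * c else 0 := by
  have key : ∀ j, coeff (e (8 - j) j) (monomial (e a b) c : MvPolynomial (Fin 2) ℂ)
      = if a = 8 - j ∧ b = j then c else 0 := by
    intro j
    rw [coeff_monomial]
    by_cases h : a = 8 - j ∧ b = j
    · rw [if_pos (e_eq_iff.mpr h), if_pos h]
    · rw [if_neg (fun hh => h (e_eq_iff.mp hh)), if_neg h]
  show (∑ j ∈ Finset.range 9, wgt j * coeff (e (8 - j) j) (monomial (e a b) c)) = _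
  by_cases h8 : a + b = 8
  · rw [Finset.sum_eq_single_of_mem b (Finset.mem_range.mpr (by omega))]
    · rw [key, if_pos ⟨by omega, rfl⟩, if_pos h8]
    · intro j _ hj
      rw [key, if_neg (fun hh => hj (hh.2.symm)), mul_zero]
  · rw [if_neg h8]
    apply Finset.sum_eq_zero
    intro j hj
    rw [key, if_neg, mul_zero]
    rintro ⟨h1, h2⟩
    have : j < 9 := Finset.mem_range.mp hj
    omega

lemma prod1 (a b : ℕ) (c : ℂ) :
    (monomial (e a b) c : MvPolynomial (Fin 2) ℂ) * (X 0 ^ 4 * (2 * X 0 + X 1))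
      = (2 : ℂ) • monomial (e (a + 5) b) c + monomial (e (a + 4) (b + 1)) c := by
  rw [mono_def, mono_def, mono_def, smul_eq_C_mul, map_ofNat]
  ring

lemma prod2 (a b : ℕ) (c : ℂ) :
    (monomial (e a b) c : MvPolynomial (Fin 2) ℂ) * (X 1 ^ 4 * (X 0 + 2 * X 1))
      = monomial (e (a + 1) (b + 4)) c + (2 : ℂ) • monomial (e a (b + 5)) c := by
  rw [mono_def, mono_def, mono_def, smul_eq_C_mul, map_ofNat]
  ring

lemma L_mul_g1 (p : MvPolynomial (Fin 2) ℂ) :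
    L (p * (X 0 ^ 4 * (2 * X 0 + X 1))) = 0 := by
  induction p using MvPolynomial.induction_on' with
  | add p q hp hq => rw [add_mul, map_add, hp, hq, add_zero]
  | monomial s c =>
    rw [eq_e s, prod1, map_add, map_smul, L_mono, L_mono]
    by_cases h : s 0 + s 1 = 3
    · rw [if_pos (by omega), if_pos (by omega)]
      have hb : s 1 ≤ 3 := by omega
      set b := s 1 with hbdef
      clear_value b
      interval_cases b <;> norm_num [wgt] <;> ring
    · rw [if_neg (by omega), if_neg (by omega), smul_zero, add_zero]

lemma L_mul_g2 (p : MvPolynomial (Fin 2) ℂ) :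
    L (p * (X 1 ^ 4 * (X 0 + 2 * X 1))) = 0 := by
  induction p using MvPolynomial.induction_on' with
  | add p q hp hq => rw [add_mul, map_add, hp, hq, add_zero]
  | monomial s c =>
    rw [eq_e s, prod2, map_add, map_smul, L_mono, L_mono]
    by_cases h : s 0 + s 1 = 3
    · rw [if_pos (by omega), if_pos (by omega)]
      have hb : s 1 ≤ 3 := by omega
      set b := s 1 with hbdef
      clear_value b
      interval_cases b <;> norm_num [wgt] <;> ring
    · rw [if_neg (by omega), if_neg (by omega), smul_zero, add_zero]

lemma L_vanish {f : MvPolynomial (Fin 2) ℂ} (hf : f ∈ chowIdeal1) : L f = 0 := by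
  rw [chowIdeal1, Ideal.mem_span_pair] at hf
  obtain ⟨u, v, huv⟩ := hf
  rw [← huv, map_add, mul_comm u, mul_comm v]
  rw [mul_comm, L_mul_g1, mul_comm, L_mul_g2, add_zero]

lemma g1_mem : (X 0 ^ 4 * (2 * X 0 + X 1) : MvPolynomial (Fin 2) ℂ) ∈ chowIdeal1 :=
  Ideal.subset_span (by simp)

lemma g2_mem : (X 1 ^ 4 * (X 0 + 2 * X 1) : MvPolynomial (Fin 2) ℂ) ∈ chowIdeal1 :=
  Ideal.subset_span (by simp)

noncomputable def pm : MvPolynomial (Fin 2) ℂ →ₐ[ℂ] MvPolynomial (Fin 2) ℂ ⧸ chowIdeal1 :=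
  Ideal.Quotient.mkₐ ℂ chowIdeal1

lemma rel1 (a b : ℕ) :
    pm (X 0 ^ (a + 4) * X 1 ^ (b + 1)) = (-2 : ℂ) • pm (X 0 ^ (a + 5) * X 1 ^ b) := by
  have h : (X 0 ^ (a + 4) * X 1 ^ (b + 1) + (2 : ℂ) • (X 0 ^ (a + 5) * X 1 ^ b)
        : MvPolynomial (Fin 2) ℂ)
      = (X 0 ^ 4 * (2 * X 0 + X 1)) * (X 0 ^ a * X 1 ^ b) := by
    rw [smul_eq_C_mul, map_ofNat]; ring
  have h0 : pm (X 0 ^ (a + 4) * X 1 ^ (b + 1) + (2 : ℂ) • (X 0 ^ (a + 5) * X 1 ^ b)) = 0 := by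
    rw [h]
    exact Ideal.Quotient.eq_zero_iff_mem.mpr (Ideal.mul_mem_right _ _ g1_mem)
  rw [map_add, map_smul] at h0
  have h1 := eq_neg_of_add_eq_zero_left h0
  rw [h1, ← neg_smul]

lemma rel2 (a b : ℕ) :
    pm (X 0 ^ (a + 1) * X 1 ^ (b + 4)) = (-2 : ℂ) • pm (X 0 ^ a * X 1 ^ (b + 5)) := by
  have h : (X 0 ^ (a + 1) * X 1 ^ (b + 4) + (2 : ℂ) • (X 0 ^ a * X 1 ^ (b + 5))
        : MvPolynomial (Fin 2) ℂ)
      = (X 1 ^ 4 * (X 0 + 2 * X 1)) * (X 0 ^ a * X 1 ^ b) := by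
    rw [smul_eq_C_mul, map_ofNat]; ring
  have h0 : pm (X 0 ^ (a + 1) * X 1 ^ (b + 4) + (2 : ℂ) • (X 0 ^ a * X 1 ^ (b + 5))) = 0 := by
    rw [h]
    exact Ideal.Quotient.eq_zero_iff_mem.mpr (Ideal.mul_mem_right _ _ g2_mem)
  rw [map_add, map_smul] at h0
  have h1 := eq_neg_of_add_eq_zero_left h0
  rw [h1, ← neg_smul]

noncomputable def q : MvPolynomial (Fin 2) ℂ ⧸ chowIdeal1 := pm (X 0 ^ 8)

lemma q_ne : q ≠ 0 := by
  intro h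
  have hm : (X 0 ^ 8 : MvPolynomial (Fin 2) ℂ) ∈ chowIdeal1 :=
    Ideal.Quotient.eq_zero_iff_mem.mp h
  have hL := L_vanish hm
  have hx : (X 0 ^ 8 : MvPolynomial (Fin 2) ℂ) = monomial (e 8 0) 1 := by
    rw [← X_pow_mul' 8 0, pow_zero, mul_one]
  rw [hx, L_mono] at hL
  norm_num [wgt] at hL

lemma mem_span (j : ℕ) (hj : j ≤ 8) :
    pm (X 0 ^ (8 - j) * X 1 ^ j) ∈ Submodule.span ℂ {q} := by
  have e1 : pm (X 0 ^ 7 * X 1 ^ 1) = (-2 : ℂ) • pm (X 0 ^ 8 * X 1 ^ 0) := rel1 3 0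
  have e2 : pm (X 0 ^ 6 * X 1 ^ 2) = (-2 : ℂ) • pm (X 0 ^ 7 * X 1 ^ 1) := rel1 2 1
  have e3 : pm (X 0 ^ 5 * X 1 ^ 3) = (-2 : ℂ) • pm (X 0 ^ 6 * X 1 ^ 2) := rel1 1 2
  have e4 : pm (X 0 ^ 4 * X 1 ^ 4) = (-2 : ℂ) • pm (X 0 ^ 5 * X 1 ^ 3) := rel1 0 3
  have f1 : pm (X 0 ^ 4 * X 1 ^ 4) = (-2 : ℂ) • pm (X 0 ^ 3 * X 1 ^ 5) := rel2 3 0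
  have f2 : pm (X 0 ^ 3 * X 1 ^ 5) = (-2 : ℂ) • pm (X 0 ^ 2 * X 1 ^ 6) := rel2 2 1
  have f3 : pm (X 0 ^ 2 * X 1 ^ 6) = (-2 : ℂ) • pm (X 0 ^ 1 * X 1 ^ 7) := rel2 1 2
  have f4 : pm (X 0 ^ 1 * X 1 ^ 7) = (-2 : ℂ) • pm (X 0 ^ 0 * X 1 ^ 8) := rel2 0 3
  have h0 : pm (X 0 ^ 8 * X 1 ^ 0) ∈ Submodule.span ℂ {q} := by
    rw [pow_zero, mul_one]
    exact Submodule.mem_span_singleton_self q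
  have h1 : pm (X 0 ^ 7 * X 1 ^ 1) ∈ Submodule.span ℂ {q} := by
    rw [e1]; exact Submodule.smul_mem _ _ h0
  have h2 : pm (X 0 ^ 6 * X 1 ^ 2) ∈ Submodule.span ℂ {q} := by
    rw [e2]; exact Submodule.smul_mem _ _ h1
  have h3 : pm (X 0 ^ 5 * X 1 ^ 3) ∈ Submodule.span ℂ {q} := by
    rw [e3]; exact Submodule.smul_mem _ _ h2
  have h4 : pm (X 0 ^ 4 * X 1 ^ 4) ∈ Submodule.span ℂ {q} := by
    rw [e4]; exact Submodule.smul_mem _ _ h3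
  have h5 : pm (X 0 ^ 3 * X 1 ^ 5) ∈ Submodule.span ℂ {q} := by
    have h : pm (X 0 ^ 3 * X 1 ^ 5) = (-(1/2) : ℂ) • pm (X 0 ^ 4 * X 1 ^ 4) := by
      rw [f1, smul_smul]; norm_num
    rw [h]; exact Submodule.smul_mem _ _ h4
  have h6 : pm (X 0 ^ 2 * X 1 ^ 6) ∈ Submodule.span ℂ {q} := by
    have h : pm (X 0 ^ 2 * X 1 ^ 6) = (-(1/2) : ℂ) • pm (X 0 ^ 3 * X 1 ^ 5) := by
      rw [f2, smul_smul]; norm_num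
    rw [h]; exact Submodule.smul_mem _ _ h5
  have h7 : pm (X 0 ^ 1 * X 1 ^ 7) ∈ Submodule.span ℂ {q} := by
    have h : pm (X 0 ^ 1 * X 1 ^ 7) = (-(1/2) : ℂ) • pm (X 0 ^ 2 * X 1 ^ 6) := by
      rw [f3, smul_smul]; norm_num
    rw [h]; exact Submodule.smul_mem _ _ h6
  have h8 : pm (X 0 ^ 0 * X 1 ^ 8) ∈ Submodule.span ℂ {q} := by
    have h : pm (X 0 ^ 0 * X 1 ^ 8) = (-(1/2) : ℂ) • pm (X 0 ^ 1 * X 1 ^ 7) := by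
      rw [f4, smul_smul]; norm_num
    rw [h]; exact Submodule.smul_mem _ _ h7
  interval_cases j
  · exact h0
  · exact h1
  · exact h2
  · exact h3
  · exact h4
  · exact h5
  · exact h6
  · exact h7
  · exact h8

end Chow15

open Chow15 in
theorem stmt15 :
    Module.finrank ℂ
      (↥(Submodule.map (Ideal.Quotient.mkₐ ℂ chowIdeal1).toLinearMap
          (homogeneousSubmodule (Fin 2) ℂ 8))) = 1 := by
  have hW : Submodule.map (Ideal.Quotient.mkₐ ℂ chowIdeal1).toLinearMap
      (homogeneousSubmodule (Fin 2) ℂ 8) = Submodule.span ℂ {q} := by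
    apply le_antisymm
    · rintro x ⟨f, hf, rfl⟩
      have hIH : f.IsHomogeneous 8 := hf
      show pm f ∈ _
      rw [as_sum f, map_sum]
      apply Submodule.sum_mem
      intro v hv
      have hw := hIH (mem_support_iff.mp hv)
      rw [show (Finsupp.weight 1 : (Fin 2 →₀ ℕ) →+ ℕ) = Finsupp.weight (fun _ => 1) from rfl,
        ← Finsupp.degree_eq_weight_one] at hw
      rw [degree_fin2] at hw
      have hv0 : v 0 = 8 - v 1 := by omega
      have hve : v = e (8 - v 1) (v 1) := by rw [← hv0]; exact eq_e v
      have hmono : (monomial v (coeff v f) : MvPolynomial (Fin 2) ℂ)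
          = coeff v f • (X 0 ^ (8 - v 1) * X 1 ^ (v 1)) := by
        rw [X_pow_mul', ← hve, smul_monomial, smul_eq_mul, mul_one]
      rw [hmono, map_smul]
      exact Submodule.smul_mem _ _ (mem_span (v 1) (by omega))
    · rw [Submodule.span_singleton_le_iff_mem]
      exact ⟨X 0 ^ 8, (mem_homogeneousSubmodule _ _).mpr (isHomogeneous_X_pow 0 8), rfl⟩
  rw [hW]
  exact finrank_span_singleton q_ne
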